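/- (Lemma 1, part 2: tensorization of the importance-aware measure for i.i.d. sequences.) Let D ≥ 2 be an integer, let p : Fin N → ℝ with p i > 0 and ∑ i, p i = 1, let w : Fin N → ℝ with w i > 0, and let n ≥ 1. Define H_w(X) = ∑ i, p i * w i, 𝓛(w,X) = -∑ i, p i * w i * log_D (p i * w i / H_w(X)), and for sequences x : Fin n → Fin N set p(x) = ∏ k, p (x k), w(x) = ∏ k, w (x k), H_w(Xⁿ) = ∑_x p(x) * w(x), and 𝓛(w,Xⁿ) = -∑_x p(x) * w(x) * log_D (p(x) * w(x) / H_w(Xⁿ)). Then 𝓛(w,Xⁿ) = n * (H_w(X))^(n-1) * 𝓛(w,X). -/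

import Mathlib

lemma iw_core (N n : ℕ) (hN : 0 < N) (f : Fin N → ℝ) (hf : ∀ i, 0 < f i) :
    ∑ x : Fin n → Fin N, (∏ k, f (x k)) * Real.log ((∏ k, f (x k)) / (∑ i, f i) ^ n)
      = (n : ℝ) * (∑ i, f i) ^ (n - 1) * ∑ i, f i * Real.log (f i / ∑ i, f i) := by
  set H := ∑ i, f i with hHdef
  have hHpos : 0 < H := Finset.sum_pos (fun i _ => hf i) ⟨⟨0, hN⟩, Finset.mem_univ _⟩
  -- log of product splits
  have hlog : ∀ x : Fin n → Fin N,
      Real.log ((∏ k, f (x k)) / H ^ n) = ∑ k, Real.log (f (x k) / H) := by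
    intro x
    have : (∏ k, f (x k)) / H ^ n = ∏ k : Fin n, f (x k) / H := by
      rw [Finset.prod_div_distrib, Finset.prod_const, Finset.card_univ, Fintype.card_fin]
    rw [this, Real.log_prod]
    exact fun k _ => ne_of_gt (div_pos (hf _) hHpos)
  -- pointwise product identity
  have pt : ∀ (x : Fin n → Fin N) (k : Fin n),
      (∏ j, f (x j)) * Real.log (f (x k) / H)
        = ∏ j, (if j = k then f (x j) * Real.log (f (x j) / H) else f (x j)) := by
    intro x k
    rw [← Finset.mul_prod_erase Finset.univ (fun j => f (x j)) (Finset.mem_univ k),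
        ← Finset.mul_prod_erase Finset.univ _ (Finset.mem_univ k)]
    rw [if_pos rfl, Finset.prod_congr rfl (fun j hj => if_neg (Finset.ne_of_mem_erase hj))]
    ring
  -- inner sum for a fixed coordinate
  have step : ∀ k : Fin n,
      (∑ x : Fin n → Fin N, ∏ j, (if j = k then f (x j) * Real.log (f (x j) / H) else f (x j)))
        = (∑ i, f i * Real.log (f i / H)) * H ^ (n - 1) := by
    intro k
    have e1 : (∑ x : Fin n → Fin N,
          ∏ j, (if j = k then f (x j) * Real.log (f (x j) / H) else f (x j)))
        = ∏ j : Fin n, ∑ i, (if j = k then f i * Real.log (f i / H) else f i) := by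
      rw [Finset.prod_univ_sum]
      simp
    rw [e1, ← Finset.mul_prod_erase Finset.univ _ (Finset.mem_univ k)]
    congr 1
    · simp
    · rw [Finset.prod_congr rfl (fun j hj => ?_), Finset.prod_const,
          Finset.card_erase_of_mem (Finset.mem_univ k), Finset.card_univ, Fintype.card_fin]
      simp [if_neg (Finset.ne_of_mem_erase hj), hHdef]
  calc ∑ x : Fin n → Fin N, (∏ k, f (x k)) * Real.log ((∏ k, f (x k)) / H ^ n)
      = ∑ x : Fin n → Fin N, ∑ k, (∏ j, f (x j)) * Real.log (f (x k) / H) := by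
        exact Finset.sum_congr rfl fun x _ => by rw [hlog x, Finset.mul_sum]
    _ = ∑ k : Fin n, ∑ x : Fin n → Fin N, (∏ j, f (x j)) * Real.log (f (x k) / H) :=
        Finset.sum_comm
    _ = ∑ k : Fin n, (∑ i, f i * Real.log (f i / H)) * H ^ (n - 1) := by
        refine Finset.sum_congr rfl fun k _ => ?_
        rw [← step k]
        exact Finset.sum_congr rfl fun x _ => pt x k
    _ = (n : ℝ) * H ^ (n - 1) * ∑ i, f i * Real.log (f i / H) := by
        rw [Finset.sum_const, Finset.card_univ, Fintype.card_fin, nsmul_eq_mul]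
        ring

/-- Lemma 1, part 2: tensorization of the importance-aware measure for i.i.d. sequences. -/
theorem iw_measure_tensorization
    (N D n : ℕ) (hD : 2 ≤ D) (hn : 1 ≤ n)
    (p w : Fin N → ℝ)
    (hp : ∀ i, 0 < p i) (hpsum : ∑ i, p i = 1)
    (hw : ∀ i, 0 < w i) :
    -∑ x : Fin n → Fin N,
        (∏ k, p (x k)) * (∏ k, w (x k)) *
          (Real.log ((∏ k, p (x k)) * (∏ k, w (x k)) /
              ∑ y : Fin n → Fin N, (∏ k, p (y k)) * (∏ k, w (y k))) /
            Real.log D) =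
      (n : ℝ) * (∑ i, p i * w i) ^ (n - 1) *
        (-∑ i, p i * w i *
          (Real.log (p i * w i / ∑ j, p j * w j) / Real.log D)) := by
  rcases Nat.eq_zero_or_pos N with hN | hN
  · subst hN
    haveI : IsEmpty (Fin n → Fin 0) := ⟨fun x => (x ⟨0, hn⟩).elim0⟩
    simp
  · have hf : ∀ i, 0 < p i * w i := fun i => mul_pos (hp i) (hw i)
    have key := iw_core N n hN (fun i => p i * w i) hf
    have hA : (∑ y : Fin n → Fin N, ∏ k, p (y k) * w (y k)) = (∑ i, p i * w i) ^ n := by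
      have h1 : (∏ _k : Fin n, ∑ i, p i * w i)
          = ∑ y : Fin n → Fin N, ∏ k, p (y k) * w (y k) := by
        rw [Finset.prod_univ_sum]; simp
      rw [← h1, Finset.prod_const, Finset.card_univ, Fintype.card_fin]
    simp only [← Finset.prod_mul_distrib, hA, div_eq_mul_inv, ← mul_assoc] at key ⊢
    rw [← Finset.sum_mul, ← Finset.sum_mul, key]
    ring
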